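/- Let s_1, ..., s_{n+1} be exchangeable real-valued random variables that are almost surely distinct. Let q̂ be the ⌈(n+1)(1-α)⌉-th smallest value among s_1, ..., s_n, for α ∈ (0,1) with ⌈(n+1)(1-α)⌉ ≤ n. Then P(s_{n+1} ≤ q̂) ≥ 1 - α. -/

import Mathlib

open MeasureTheory
open scoped ENNReal

/-- A finite family of real random variables is exchangeable if its joint law is
invariant under every permutation of the indices. -/
def Exchangeable {Ω : Type*} [MeasurableSpace Ω] {m : ℕ} (P : Measure Ω)
    (s : Fin m → Ω → ℝ) : Prop :=
  ∀ σ : Equiv.Perm (Fin m),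
    Measure.map (fun ω i => s (σ i) ω) P = Measure.map (fun ω i => s i ω) P

/-- The `k`-th smallest value (0-indexed) of the tuple `v`. -/
noncomputable def orderStat {m : ℕ} (v : Fin m → ℝ) (k : Fin m) : ℝ :=
  v (Tuple.sort v k)

open Finset in
open Classical in
/-- The rank of coordinate `j` in the tuple `v`: the number of coordinates `≤ v j`. -/
noncomputable def rkAux {m : ℕ} (j : Fin m) (v : Fin m → ℝ) : ℕ :=
  (Finset.univ.filter (fun i => v i ≤ v j)).card

lemma rkAux_measurable {m : ℕ} (j : Fin m) : Measurable (rkAux (m := m) j) := by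
  classical
  have : rkAux (m := m) j = fun v => ∑ i : Fin m, if v i ≤ v j then 1 else 0 := by
    funext v
    rw [rkAux, Finset.card_filter]
  rw [this]
  exact Finset.measurable_sum _ fun i _ =>
    Measurable.ite (measurableSet_le (measurable_pi_apply i) (measurable_pi_apply j))
      measurable_const measurable_const

lemma rkAux_comp_perm {m : ℕ} (σ : Equiv.Perm (Fin m)) (j : Fin m) (v : Fin m → ℝ) :
    rkAux j (fun i => v (σ i)) = rkAux (σ j) v := by
  classical
  simp only [rkAux]
  exact Finset.card_bij' (fun i _ => σ i) (fun i _ => σ.symm i)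
    (by simp) (by simp) (by simp) (by simp)

lemma rkAux_pos {m : ℕ} (j : Fin m) (v : Fin m → ℝ) : 1 ≤ rkAux j v := by
  classical
  rw [rkAux, Finset.one_le_card]
  exact ⟨j, by simp⟩

lemma rkAux_le {m : ℕ} (j : Fin m) (v : Fin m → ℝ) : rkAux j v ≤ m := by
  classical
  rw [rkAux]
  exact le_trans (Finset.card_le_card (Finset.filter_subset _ _)) (by simp)

lemma rkAux_injective {m : ℕ} {v : Fin m → ℝ} (hv : Function.Injective v) :
    Function.Injective (fun j => rkAux j v) := by
  classical
  have key : ∀ j j' : Fin m, v j < v j' → rkAux j v < rkAux j' v := by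
    intro j j' h
    simp only [rkAux]
    apply Finset.card_lt_card
    constructor
    · intro i hi
      simp only [Finset.mem_filter] at hi ⊢
      exact ⟨hi.1, hi.2.trans h.le⟩
    · intro hsub
      have := hsub (Finset.mem_filter.2 ⟨Finset.mem_univ j', le_refl _⟩)
      simp only [Finset.mem_filter] at this
      exact absurd this.2 (not_le.2 h)
  intro j j' h
  by_contra hne
  rcases lt_trichotomy (v j) (v j') with hlt | heq | hgt
  · exact absurd h (key j j' hlt).ne
  · exact hne (hv heq)
  · exact absurd h.symm (key j' j hgt).ne

lemma rkAux_surj {m : ℕ} {v : Fin m → ℝ} (hv : Function.Injective v)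
    {k : ℕ} (hk1 : 1 ≤ k) (hkm : k ≤ m) : ∃ j, rkAux j v = k := by
  classical
  have himg : Finset.univ.image (fun j => rkAux j v) = Finset.Icc 1 m := by
    apply Finset.eq_of_subset_of_card_le
    · intro x hx
      simp only [Finset.mem_image] at hx
      obtain ⟨j, _, rfl⟩ := hx
      exact Finset.mem_Icc.2 ⟨rkAux_pos j v, rkAux_le j v⟩
    · rw [Finset.card_image_of_injective _ (rkAux_injective hv)]
      simp [Nat.card_Icc]
  have : k ∈ Finset.univ.image (fun j => rkAux j v) := by
    rw [himg]; exact Finset.mem_Icc.2 ⟨hk1, hkm⟩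
  simpa using this

lemma le_orderStat_of_card_lt_le {m : ℕ} (w : Fin m → ℝ) (x : ℝ) (k : Fin m)
    (h : (Finset.univ.filter (fun i => w i < x)).card ≤ (k : ℕ)) :
    x ≤ orderStat w k := by
  classical
  by_contra hc
  push_neg at hc
  have hmono := Tuple.monotone_sort w
  have hsub : (Finset.Iic k).image (Tuple.sort w) ⊆
      Finset.univ.filter (fun i => w i < x) := by
    intro i hi
    simp only [Finset.mem_image, Finset.mem_Iic] at hi
    obtain ⟨j, hj, rfl⟩ := hi
    refine Finset.mem_filter.2 ⟨Finset.mem_univ _, lt_of_le_of_lt ?_ hc⟩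
    exact hmono hj
  have hcard := Finset.card_le_card hsub
  rw [Finset.card_image_of_injective _ (Tuple.sort w).injective, Fin.card_Iic] at hcard
  omega

open Classical in
lemma last_le_orderStat {n : ℕ} (v : Fin (n + 1) → ℝ) (l : ℕ) (hl1 : 1 ≤ l) (hln : l ≤ n)
    (h : rkAux (Fin.last n) v ≤ l) :
    v (Fin.last n) ≤ orderStat (fun i : Fin n => v i.castSucc) ⟨l - 1, by omega⟩ := by
  classical
  set x := v (Fin.last n)
  apply le_orderStat_of_card_lt_le
  show (Finset.univ.filter (fun i : Fin n => v i.castSucc < x)).card ≤ l - 1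
  have hsub : insert (Fin.last n)
      ((Finset.univ.filter (fun i : Fin n => v i.castSucc < x)).image Fin.castSucc) ⊆
      Finset.univ.filter (fun i => v i ≤ x) := by
    intro i hi
    rcases Finset.mem_insert.1 hi with rfl | hi
    · exact Finset.mem_filter.2 ⟨Finset.mem_univ _, le_refl _⟩
    · simp only [Finset.mem_image, Finset.mem_filter] at hi
      obtain ⟨j, hj, rfl⟩ := hi
      exact Finset.mem_filter.2 ⟨Finset.mem_univ _, hj.2.le⟩
  have hcard := Finset.card_le_card hsub
  rw [Finset.card_insert_of_notMem (by
    simp only [Finset.mem_image]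
    rintro ⟨j, -, hj⟩
    exact absurd hj (Fin.castSucc_lt_last j).ne),
    Finset.card_image_of_injective _ (Fin.castSucc_injective n)] at hcard
  have : rkAux (Fin.last n) v = (Finset.univ.filter (fun i => v i ≤ x)).card := rfl
  omega

/-- Marginal coverage lower bound for split conformal prediction:
if `s 0, …, s n` are exchangeable and a.s. distinct, and `q̂` is the
`⌈(n+1)(1-α)⌉`-th smallest of the first `n` scores, then
`P(s_{n+1} ≤ q̂) ≥ 1 - α`. -/
theorem conformal_marginal_coverage_lower
    {Ω : Type*} [MeasurableSpace Ω] (P : Measure Ω) [IsProbabilityMeasure P]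
    {n : ℕ} (s : Fin (n + 1) → Ω → ℝ) (hmeas : ∀ i, Measurable (s i))
    (hexch : Exchangeable P s)
    (hdist : ∀ᵐ ω ∂P, Function.Injective fun i => s i ω)
    (α : ℝ) (hα : α ∈ Set.Ioo (0 : ℝ) 1)
    (l : ℕ) (hl : l = ⌈((n : ℝ) + 1) * (1 - α)⌉₊) (hl1 : 1 ≤ l) (hln : l ≤ n)
    (qhat : Ω → ℝ)
    (hq : ∀ ω, qhat ω =
      orderStat (fun i : Fin n => s i.castSucc ω) ⟨l - 1, by omega⟩) :
    ENNReal.ofReal (1 - α) ≤ P {ω | s (Fin.last n) ω ≤ qhat ω} := by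
  classical
  set S : Ω → (Fin (n + 1) → ℝ) := fun ω i => s i ω with hS_def
  have hS : Measurable S := measurable_pi_lambda _ hmeas
  set μ : Measure (Fin (n + 1) → ℝ) := Measure.map S P with hμ_def
  -- permutation invariance of μ
  have hinv : ∀ σ : Equiv.Perm (Fin (n + 1)),
      Measure.map (fun v i => v (σ i)) μ = μ := by
    intro σ
    have hc : Measurable (fun v : Fin (n + 1) → ℝ => fun i => v (σ i)) :=
      measurable_pi_lambda _ fun i => measurable_pi_apply (σ i)
    rw [hμ_def, Measure.map_map hc hS]
    exact hexch σ
  -- rank sets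
  have hAmeas : ∀ (j : Fin (n + 1)) (k : ℕ),
      MeasurableSet {v : Fin (n + 1) → ℝ | rkAux j v = k} :=
    fun j k => rkAux_measurable j (measurableSet_singleton k)
  -- equal probabilities of rank events across coordinates
  have hAeq : ∀ (j : Fin (n + 1)) (k : ℕ),
      μ {v | rkAux j v = k} = μ {v | rkAux (Fin.last n) v = k} := by
    intro j k
    set σ : Equiv.Perm (Fin (n + 1)) := Equiv.swap (Fin.last n) j with hσ
    have hc : Measurable (fun v : Fin (n + 1) → ℝ => fun i => v (σ i)) :=
      measurable_pi_lambda _ fun i => measurable_pi_apply (σ i)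
    have := hinv σ
    calc μ {v | rkAux j v = k}
        = Measure.map (fun v i => v (σ i)) μ {v | rkAux j v = k} := by rw [this]
      _ = μ ((fun v i => v (σ i)) ⁻¹' {v | rkAux j v = k}) :=
          Measure.map_apply hc (hAmeas j k)
      _ = μ {v | rkAux (Fin.last n) v = k} := by
          congr 1
          ext v
          simp only [Set.mem_preimage, Set.mem_setOf_eq]
          rw [rkAux_comp_perm σ j v, hσ, Equiv.swap_apply_right]
  -- the injective tuples have full measure
  have hImeas : MeasurableSet {v : Fin (n + 1) → ℝ | Function.Injective v} := by
    have : {v : Fin (n + 1) → ℝ | Function.Injective v} =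
        ⋂ (i) (j) (_ : i ≠ j), {v | v i ≠ v j} := by
      ext v
      simp only [Set.mem_setOf_eq, Set.mem_iInter, Function.Injective]
      constructor
      · intro h i j hij
        exact fun he => hij (h he)
      · intro h i j he
        by_contra hij
        exact h i j hij he
    rw [this]
    refine MeasurableSet.iInter fun i => MeasurableSet.iInter fun j =>
      MeasurableSet.iInter fun _ => ?_
    exact (measurableSet_eq_fun (measurable_pi_apply i) (measurable_pi_apply j)).compl
  have hI1 : μ {v : Fin (n + 1) → ℝ | Function.Injective v} = 1 := by
    rw [hμ_def, Measure.map_apply hS hImeas]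
    rw [← prob_compl_eq_zero_iff (hS hImeas)]
    rw [ae_iff] at hdist
    convert hdist using 2
    rfl
  -- each rank value k ∈ [1, n+1] has μ-probability at least 1/(n+1) at the last coordinate
  have hlow : ∀ k : ℕ, 1 ≤ k → k ≤ n + 1 →
      ((n : ℝ≥0∞) + 1)⁻¹ ≤ μ {v | rkAux (Fin.last n) v = k} := by
    intro k hk1 hkm
    have hcover : {v : Fin (n + 1) → ℝ | Function.Injective v} ⊆
        ⋃ j : Fin (n + 1), {v | rkAux j v = k} := by
      intro v hv
      obtain ⟨j, hj⟩ := rkAux_surj hv hk1 hkm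
      exact Set.mem_iUnion.2 ⟨j, hj⟩
    have h1 : (1 : ℝ≥0∞) ≤ ∑ j : Fin (n + 1), μ {v | rkAux j v = k} := by
      calc (1 : ℝ≥0∞) = μ {v | Function.Injective v} := hI1.symm
        _ ≤ μ (⋃ j : Fin (n + 1), {v | rkAux j v = k}) := measure_mono hcover
        _ ≤ ∑' j : Fin (n + 1), μ {v | rkAux j v = k} := measure_iUnion_le _
        _ = ∑ j : Fin (n + 1), μ {v | rkAux j v = k} := tsum_fintype _
    have h2 : ∑ j : Fin (n + 1), μ {v | rkAux j v = k} =
        ((n : ℝ≥0∞) + 1) * μ {v | rkAux (Fin.last n) v = k} := by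
      rw [Finset.sum_congr rfl (fun j _ => hAeq j k), Finset.sum_const]
      simp [Finset.card_univ, mul_comm, nsmul_eq_mul]
    rw [h2] at h1
    have hne : ((n : ℝ≥0∞) + 1) ≠ 0 := by simp
    have hnt : ((n : ℝ≥0∞) + 1) ≠ ⊤ := by simp
    calc ((n : ℝ≥0∞) + 1)⁻¹ = ((n : ℝ≥0∞) + 1)⁻¹ * 1 := (mul_one _).symm
      _ ≤ ((n : ℝ≥0∞) + 1)⁻¹ * (((n : ℝ≥0∞) + 1) * μ {v | rkAux (Fin.last n) v = k}) :=
          mul_le_mul_right h1 _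
      _ = μ {v | rkAux (Fin.last n) v = k} := by
          rw [← mul_assoc, ENNReal.inv_mul_cancel hne hnt, one_mul]
  -- lower bound on the event rank ≤ l
  have hrankle : (l : ℝ≥0∞) * ((n : ℝ≥0∞) + 1)⁻¹ ≤ μ {v | rkAux (Fin.last n) v ≤ l} := by
    have hdisj : (↑(Finset.Icc 1 l : Finset ℕ) : Set ℕ).PairwiseDisjoint
        (fun k => {v : Fin (n + 1) → ℝ | rkAux (Fin.last n) v = k}) := by
      intro a _ b _ hab
      refine Set.disjoint_left.2 fun v hva hvb => hab ?_
      exact hva.symm.trans hvb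
    have hsum := measure_biUnion_finset (μ := μ) hdisj (fun k _ => hAmeas (Fin.last n) k)
    have hsub : (⋃ k ∈ Finset.Icc 1 l, {v : Fin (n + 1) → ℝ | rkAux (Fin.last n) v = k}) ⊆
        {v | rkAux (Fin.last n) v ≤ l} := by
      intro v hv
      simp only [Set.mem_iUnion, Set.mem_setOf_eq] at hv ⊢
      obtain ⟨k, hk, hkv⟩ := hv
      rw [hkv]
      exact (Finset.mem_Icc.1 hk).2
    calc (l : ℝ≥0∞) * ((n : ℝ≥0∞) + 1)⁻¹
        = ∑ _k ∈ Finset.Icc 1 l, ((n : ℝ≥0∞) + 1)⁻¹ := by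
          rw [Finset.sum_const, Nat.card_Icc]
          simp [nsmul_eq_mul]
      _ ≤ ∑ k ∈ Finset.Icc 1 l, μ {v | rkAux (Fin.last n) v = k} := by
          refine Finset.sum_le_sum fun k hk => ?_
          have := Finset.mem_Icc.1 hk
          exact hlow k this.1 (this.2.trans (by omega))
      _ = μ (⋃ k ∈ Finset.Icc 1 l, {v : Fin (n + 1) → ℝ | rkAux (Fin.last n) v = k}) :=
          hsum.symm
      _ ≤ μ {v | rkAux (Fin.last n) v ≤ l} := measure_mono hsub
  -- transfer back to Ω and conclude via the pointwise inclusion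
  have hBmeas : MeasurableSet {v : Fin (n + 1) → ℝ | rkAux (Fin.last n) v ≤ l} :=
    rkAux_measurable (Fin.last n) measurableSet_Iic
  have htransfer : μ {v | rkAux (Fin.last n) v ≤ l} =
      P {ω | rkAux (Fin.last n) (S ω) ≤ l} := by
    rw [hμ_def, Measure.map_apply hS hBmeas]
    rfl
  have hincl : {ω | rkAux (Fin.last n) (S ω) ≤ l} ⊆ {ω | s (Fin.last n) ω ≤ qhat ω} := by
    intro ω hω
    simp only [Set.mem_setOf_eq] at hω ⊢
    have := last_le_orderStat (S ω) l hl1 hln hω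
    rw [hq ω]
    exact this
  have hfinal : (l : ℝ≥0∞) * ((n : ℝ≥0∞) + 1)⁻¹ ≤ P {ω | s (Fin.last n) ω ≤ qhat ω} := by
    calc (l : ℝ≥0∞) * ((n : ℝ≥0∞) + 1)⁻¹
        ≤ μ {v | rkAux (Fin.last n) v ≤ l} := hrankle
      _ = P {ω | rkAux (Fin.last n) (S ω) ≤ l} := htransfer
      _ ≤ P {ω | s (Fin.last n) ω ≤ qhat ω} := measure_mono hincl
  refine le_trans ?_ hfinal
  -- arithmetic: 1 - α ≤ l / (n+1)
  have hα1 : (0 : ℝ) < 1 - α := by linarith [hα.2]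
  have hnpos : (0 : ℝ) < (n : ℝ) + 1 := by positivity
  have hlge : ((n : ℝ) + 1) * (1 - α) ≤ (l : ℝ) := by
    rw [hl]
    exact Nat.le_ceil _
  have hreal : 1 - α ≤ (l : ℝ) / ((n : ℝ) + 1) := by
    rw [le_div_iff₀ hnpos]
    linarith [hlge]
  calc ENNReal.ofReal (1 - α) ≤ ENNReal.ofReal ((l : ℝ) / ((n : ℝ) + 1)) :=
        ENNReal.ofReal_le_ofReal hreal
    _ = (l : ℝ≥0∞) * ((n : ℝ≥0∞) + 1)⁻¹ := by
        rw [ENNReal.ofReal_div_of_pos hnpos, div_eq_mul_inv]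
        congr 1
        · exact ENNReal.ofReal_natCast l
        · congr 1
          rw [ENNReal.ofReal_add (by positivity) zero_le_one]
          simp [ENNReal.ofReal_natCast]
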